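/- Fix x ∈ (0,1) in the interior of the convex support of P^X and ℓ ≥ 0. Let (P_n) be a sequence of Borel probability measures on [0,1] × ℝ with finite second moments converging weakly to P. Then there is a finite constant B (depending on x, ℓ, P) such that for every sequence of increasing functions f_n: [0,1] → ℝ with limsup_n ∫ (y − f_n(x'))² dP_n(x',y) ≤ ℓ, one has limsup_n |f_n(x)| < B. -/

import Mathlib

open MeasureTheory Filter


noncomputable def clamp01 (t : ℝ) : ℝ := max 0 (min 1 t)

lemma clamp01_nonneg (t : ℝ) : 0 ≤ clamp01 t := le_max_left _ _
lemma clamp01_le_one (t : ℝ) : clamp01 t ≤ 1 := max_le zero_le_one (min_le_left _ _)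
lemma clamp01_eq_one {t : ℝ} (h : 1 ≤ t) : clamp01 t = 1 := by
  rw [clamp01, min_eq_left h, max_eq_right zero_le_one]
lemma pos_of_clamp01_pos {t : ℝ} (h : 0 < clamp01 t) : 0 < t := by
  by_contra h'
  push_neg at h'
  rw [clamp01, max_eq_left (le_trans (min_le_right 1 t) h')] at h
  exact lt_irrefl 0 h
lemma clamp01_continuous : Continuous clamp01 :=
  continuous_const.max (continuous_const.min continuous_id)

noncomputable def bump (κ x s : ℝ) (p : ℝ × ℝ) : ℝ :=
  clamp01 (2*κ*(s*(p.1 - x) - 1/(2*κ))) * clamp01 (κ - |p.2|)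

lemma bump_nonneg (κ x s : ℝ) (p : ℝ × ℝ) : 0 ≤ bump κ x s p :=
  mul_nonneg (clamp01_nonneg _) (clamp01_nonneg _)
lemma bump_le_one (κ x s : ℝ) (p : ℝ × ℝ) : bump κ x s p ≤ 1 :=
  mul_le_one₀ (clamp01_le_one _) (clamp01_nonneg _) (clamp01_le_one _)
lemma bump_continuous (κ x s : ℝ) : Continuous (bump κ x s) := by
  apply Continuous.mul
  · exact clamp01_continuous.comp (by fun_prop)
  · exact clamp01_continuous.comp (continuous_const.sub (continuous_abs.comp continuous_snd))

lemma bump_eq_one {κ x s : ℝ} (hκ : 0 < κ) {p : ℝ × ℝ}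
    (h1 : 1/κ ≤ s*(p.1 - x)) (h2 : |p.2| ≤ κ - 1) : bump κ x s p = 1 := by
  have e1 : 2*κ*(1/(2*κ)) = 1 := by field_simp
  have e3 : 2*κ*(1/κ) = 2 := by field_simp
  have hA : (1:ℝ) ≤ 2*κ*(s*(p.1 - x) - 1/(2*κ)) := by nlinarith [h1, hκ]
  have hB : (1:ℝ) ≤ κ - |p.2| := by linarith
  rw [bump, clamp01_eq_one hA, clamp01_eq_one hB, mul_one]

lemma bump_pos {κ x s : ℝ} (hκ : 0 < κ) {p : ℝ × ℝ} (h : 0 < bump κ x s p) :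
    0 < s*(p.1 - x) ∧ |p.2| < κ := by
  have hn1 := clamp01_nonneg (2*κ*(s*(p.1 - x) - 1/(2*κ)))
  have hn2 := clamp01_nonneg (κ - |p.2|)
  have hc1 : 0 < clamp01 (2*κ*(s*(p.1 - x) - 1/(2*κ))) := by
    rcases hn1.lt_or_eq with h' | h'
    · exact h'
    · exfalso; rw [bump, ← h', zero_mul] at h; exact lt_irrefl 0 h
  have hc2 : 0 < clamp01 (κ - |p.2|) := by
    rcases hn2.lt_or_eq with h' | h'
    · exact h'
    · exfalso; rw [bump, ← h', mul_zero] at h; exact lt_irrefl 0 h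
  have hp1 := pos_of_clamp01_pos hc1
  have hp2 := pos_of_clamp01_pos hc2
  have hinv : (0:ℝ) < 1/(2*κ) := by positivity
  constructor
  · have hy : 0 < s*(p.1 - x) - 1/(2*κ) := by
      by_contra hy
      push_neg at hy
      nlinarith
    linarith
  · linarith

lemma bump_integrable (κ x s : ℝ) (μ : Measure (ℝ × ℝ)) [IsFiniteMeasure μ] :
    Integrable (bump κ x s) μ := by
  refine Integrable.mono' (integrable_const 1)
    ((bump_continuous κ x s).aestronglyMeasurable) (ae_of_all _ fun p => ?_)
  rw [Real.norm_eq_abs, abs_of_nonneg (bump_nonneg κ x s p)]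
  exact bump_le_one κ x s p

lemma bump_integral_ge (κ x s : ℝ) (hκ : 0 < κ) (μ : Measure (ℝ × ℝ)) [IsFiniteMeasure μ] :
    (μ {p : ℝ × ℝ | 1/κ ≤ s*(p.1 - x) ∧ |p.2| ≤ κ - 1}).toReal ≤ ∫ p, bump κ x s p ∂μ := by
  set S : Set (ℝ × ℝ) := {p : ℝ × ℝ | 1/κ ≤ s*(p.1 - x) ∧ |p.2| ≤ κ - 1} with hSdef
  have hS : MeasurableSet S := by
    have h1 : MeasurableSet {p : ℝ × ℝ | 1/κ ≤ s*(p.1 - x)} :=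
      measurableSet_le measurable_const ((measurable_fst.sub measurable_const).const_mul s)
    have h2 : MeasurableSet {p : ℝ × ℝ | |p.2| ≤ κ - 1} :=
      measurableSet_le measurable_snd.abs measurable_const
    exact h1.inter h2
  have hind : ∀ p, S.indicator (fun _ => (1:ℝ)) p ≤ bump κ x s p := by
    intro p
    by_cases hp : p ∈ S
    · rw [Set.indicator_of_mem hp, bump_eq_one hκ hp.1 hp.2]
    · rw [Set.indicator_of_notMem hp]; exact bump_nonneg κ x s p
  calc (μ S).toReal = ∫ p, S.indicator (fun _ => (1:ℝ)) p ∂μ := by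
        rw [integral_indicator_const (1:ℝ) hS, smul_eq_mul, mul_one]; rfl
    _ ≤ ∫ p, bump κ x s p ∂μ :=
        integral_mono ((integrable_const (1:ℝ)).indicator hS) (bump_integrable κ x s μ) hind

lemma exists_pos_meas {α : Type*} [MeasurableSpace α] (μ : Measure α) {S : ℕ → Set α}
    (hmono : Monotone S) {A : Set α} (hsub : A ⊆ ⋃ k, S k) (hA : 0 < μ A) :
    ∃ k, 0 < μ (S k) := by
  have h := Directed.measure_iUnion (μ := μ)
    (fun i j => ⟨max i j, hmono (le_max_left i j), hmono (le_max_right i j)⟩)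
  have h2 : 0 < ⨆ k, μ (S k) := h ▸ lt_of_lt_of_le hA (measure_mono hsub)
  exact lt_iSup_iff.mp h2

set_option maxHeartbeats 1000000 in
/-- Lemma S7 of the paper: for `x` interior to the convex support of `P^X` and
`ℓ ≥ 0`, there is a finite bound `B` such that any sequence of increasing
functions whose losses under `P_n` have limsup at most `ℓ` satisfies
`limsup_n |f_n(x)| < B`, where `P_n → P` weakly. -/
theorem stmt18 (x ℓ : ℝ) (hx : x ∈ Set.Ioo (0 : ℝ) 1) (hℓ : 0 ≤ ℓ)
    (P : Measure (ℝ × ℝ)) (Pn : ℕ → Measure (ℝ × ℝ))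
    [IsProbabilityMeasure P] [∀ n, IsProbabilityMeasure (Pn n)]
    (hPsupp : P {p : ℝ × ℝ | p.1 ∈ Set.Icc 0 1} = 1)
    (hPnsupp : ∀ n, Pn n {p : ℝ × ℝ | p.1 ∈ Set.Icc 0 1} = 1)
    (hP2 : Integrable (fun p : ℝ × ℝ => ‖p‖ ^ 2) P)
    (hPn2 : ∀ n, Integrable (fun p : ℝ × ℝ => ‖p‖ ^ 2) (Pn n))
    (hxL : 0 < P {p : ℝ × ℝ | p.1 < x})
    (hxR : 0 < P {p : ℝ × ℝ | x < p.1})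
    (hweak : ∀ g : ℝ × ℝ → ℝ, Continuous g → (∃ C, ∀ p, |g p| ≤ C) →
      Tendsto (fun n => ∫ p, g p ∂(Pn n)) atTop (nhds (∫ p, g p ∂P))) :
    ∃ B : ℝ, ∀ f : ℕ → ℝ → ℝ,
      (∀ n, MonotoneOn (f n) (Set.Icc (0 : ℝ) 1)) →
      limsup (fun n => ∫⁻ p, ENNReal.ofReal ((p.2 - f n p.1) ^ 2) ∂(Pn n)) atTop ≤
        ENNReal.ofReal ℓ →
      limsup (fun n => ENNReal.ofReal |f n x|) atTop < ENNReal.ofReal B := by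
  obtain ⟨hx0, hx1⟩ := hx
  set SL : ℕ → Set (ℝ × ℝ) := fun k => {p : ℝ × ℝ | p.1 ≤ x - 1/((k:ℝ)+1) ∧ |p.2| ≤ (k:ℝ)}
    with hSLdef
  set SR : ℕ → Set (ℝ × ℝ) := fun k => {p : ℝ × ℝ | x + 1/((k:ℝ)+1) ≤ p.1 ∧ |p.2| ≤ (k:ℝ)}
    with hSRdef
  have hmonoL : Monotone SL := by
    intro a b hab p hp
    have hab' : (a:ℝ) ≤ b := Nat.cast_le.mpr hab
    have h1 : 1/((b:ℝ)+1) ≤ 1/((a:ℝ)+1) :=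
      one_div_le_one_div_of_le (by positivity) (by linarith)
    exact ⟨by linarith [hp.1], le_trans hp.2 hab'⟩
  have hmonoR : Monotone SR := by
    intro a b hab p hp
    have hab' : (a:ℝ) ≤ b := Nat.cast_le.mpr hab
    have h1 : 1/((b:ℝ)+1) ≤ 1/((a:ℝ)+1) :=
      one_div_le_one_div_of_le (by positivity) (by linarith)
    exact ⟨by linarith [hp.1], le_trans hp.2 hab'⟩
  have hcovL : {p : ℝ × ℝ | p.1 < x} ⊆ ⋃ k, SL k := by
    intro p hp
    obtain ⟨n, hn⟩ := exists_nat_ge (max (1/(x - p.1)) |p.2|)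
    have hd : 0 < x - p.1 := sub_pos.mpr hp
    have h1 : 1/(x - p.1) ≤ (n:ℝ) := le_trans (le_max_left _ _) hn
    have h2 : |p.2| ≤ (n:ℝ) := le_trans (le_max_right _ _) hn
    have h3 : 1 ≤ (x - p.1) * ((n:ℝ)+1) := by
      have := (div_le_iff₀ hd).mp (show 1/(x - p.1) ≤ (n:ℝ)+1 by linarith)
      linarith
    have h4 : 1/((n:ℝ)+1) ≤ x - p.1 := by
      rw [div_le_iff₀ (by positivity : (0:ℝ) < (n:ℝ)+1)]
      linarith
    exact Set.mem_iUnion.mpr ⟨n, ⟨by linarith, h2⟩⟩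
  have hcovR : {p : ℝ × ℝ | x < p.1} ⊆ ⋃ k, SR k := by
    intro p hp
    obtain ⟨n, hn⟩ := exists_nat_ge (max (1/(p.1 - x)) |p.2|)
    have hd : 0 < p.1 - x := sub_pos.mpr hp
    have h1 : 1/(p.1 - x) ≤ (n:ℝ) := le_trans (le_max_left _ _) hn
    have h2 : |p.2| ≤ (n:ℝ) := le_trans (le_max_right _ _) hn
    have h3 : 1 ≤ (p.1 - x) * ((n:ℝ)+1) := by
      have := (div_le_iff₀ hd).mp (show 1/(p.1 - x) ≤ (n:ℝ)+1 by linarith)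
      linarith
    have h4 : 1/((n:ℝ)+1) ≤ p.1 - x := by
      rw [div_le_iff₀ (by positivity : (0:ℝ) < (n:ℝ)+1)]
      linarith
    exact Set.mem_iUnion.mpr ⟨n, ⟨by linarith, h2⟩⟩
  obtain ⟨jL, hjL⟩ := exists_pos_meas P hmonoL hcovL hxL
  obtain ⟨jR, hjR⟩ := exists_pos_meas P hmonoR hcovR hxR
  set j := max jL jR with hjdef
  set κ : ℝ := (j:ℝ) + 1 with hκdef
  have hκ : 0 < κ := by positivity
  have hjL' : 0 < P (SL j) := lt_of_lt_of_le hjL (measure_mono (hmonoL (le_max_left _ _)))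
  have hjR' : 0 < P (SR j) := lt_of_lt_of_le hjR (measure_mono (hmonoR (le_max_right _ _)))
  set AL : Set (ℝ × ℝ) := {p : ℝ × ℝ | 1/κ ≤ (-1)*(p.1 - x) ∧ |p.2| ≤ κ - 1} with hALdef
  set AR : Set (ℝ × ℝ) := {p : ℝ × ℝ | 1/κ ≤ (1:ℝ)*(p.1 - x) ∧ |p.2| ≤ κ - 1} with hARdef
  have hPAL : 0 < P AL := by
    refine lt_of_lt_of_le hjL' (measure_mono fun p hp => ?_)
    obtain ⟨h1, h2⟩ := hp
    exact ⟨by rw [hκdef]; linarith, by rw [hκdef]; push_cast; linarith⟩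
  have hPAR : 0 < P AR := by
    refine lt_of_lt_of_le hjR' (measure_mono fun p hp => ?_)
    obtain ⟨h1, h2⟩ := hp
    exact ⟨by rw [hκdef]; linarith, by rw [hκdef]; push_cast; linarith⟩
  set cL : ℝ := (P AL).toReal with hcLdef
  set cR : ℝ := (P AR).toReal with hcRdef
  have hcL : 0 < cL := ENNReal.toReal_pos hPAL.ne' (measure_ne_top P AL)
  have hcR : 0 < cR := ENNReal.toReal_pos hPAR.ne' (measure_ne_top P AR)
  set c : ℝ := min cL cR with hcdef
  have hc : 0 < c := lt_min hcL hcR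
  have hc' : c ≠ 0 := ne_of_gt hc
  have hIL : cL ≤ ∫ p, bump κ x (-1) p ∂P := bump_integral_ge κ x (-1) hκ P
  have hIR : cR ≤ ∫ p, bump κ x 1 p ∂P := bump_integral_ge κ x 1 hκ P
  have hbd : ∀ s : ℝ, ∃ C, ∀ p, |bump κ x s p| ≤ C := fun s =>
    ⟨1, fun p => by
      rw [abs_of_nonneg (bump_nonneg κ x s p)]; exact bump_le_one κ x s p⟩
  have hevL : ∀ᶠ n in atTop, c/2 < ∫ p, bump κ x (-1) p ∂(Pn n) := by
    refine (hweak (bump κ x (-1)) (bump_continuous κ x (-1)) (hbd _)).eventually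
      (eventually_gt_nhds ?_)
    have := min_le_left cL cR
    linarith
  have hevR : ∀ᶠ n in atTop, c/2 < ∫ p, bump κ x 1 p ∂(Pn n) := by
    refine (hweak (bump κ x 1) (bump_continuous κ x 1) (hbd _)).eventually
      (eventually_gt_nhds ?_)
    have := min_le_right cL cR
    linarith
  set C : ℝ := 2*(ℓ+1)/c with hCdef
  have hC : 0 < C := div_pos (by linarith) hc
  have e2 : C * (c/2) = ℓ + 1 := by rw [hCdef]; field_simp
  set T : ℝ := κ + Real.sqrt C with hTdef
  have hT0 : 0 ≤ T := add_nonneg hκ.le (Real.sqrt_nonneg C)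
  clear_value SL SR j κ AL AR cL cR c C T
  refine ⟨T + 1, fun f hmono hloss => ?_⟩
  have hev3 : ∀ᶠ n in atTop,
      (∫⁻ p, ENNReal.ofReal ((p.2 - f n p.1) ^ 2) ∂(Pn n)) < ENNReal.ofReal (ℓ+1) := by
    refine eventually_lt_of_limsup_lt (lt_of_le_of_lt hloss ?_)
    exact (ENNReal.ofReal_lt_ofReal_iff (by linarith)).mpr (by linarith)
  have key : ∀ᶠ n in atTop, |f n x| ≤ T := by
    filter_upwards [hevL, hevR, hev3] with n hL hR hls
    by_contra habs
    push_neg at habs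
    have hae : ∀ᵐ p ∂(Pn n), p.1 ∈ Set.Icc (0:ℝ) 1 := by
      have hm : MeasurableSet {p : ℝ × ℝ | p.1 ∈ Set.Icc (0:ℝ) 1} :=
        measurable_fst measurableSet_Icc
      have h0 : Pn n {p : ℝ × ℝ | p.1 ∈ Set.Icc (0:ℝ) 1}ᶜ = 0 := by
        rw [measure_compl hm (measure_ne_top _ _), hPnsupp n, measure_univ, tsub_self]
      exact ae_iff.mpr h0
    have hbig : ∀ s : ℝ, (∀ᵐ p ∂(Pn n),
          ENNReal.ofReal (C * bump κ x s p) ≤ ENNReal.ofReal ((p.2 - f n p.1) ^ 2)) →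
        c/2 < ∫ p, bump κ x s p ∂(Pn n) → False := by
      intro s hpt hint
      have hbig2 : ENNReal.ofReal (ℓ+1) ≤ ∫⁻ p, ENNReal.ofReal ((p.2 - f n p.1) ^ 2) ∂(Pn n) := by
        have e1 : C * (c/2) ≤ C * ∫ p, bump κ x s p ∂(Pn n) :=
          mul_le_mul_of_nonneg_left hint.le hC.le
        calc ENNReal.ofReal (ℓ+1) ≤ ENNReal.ofReal (C * ∫ p, bump κ x s p ∂(Pn n)) := by
              apply ENNReal.ofReal_le_ofReal; rw [← e2]; exact e1
          _ = ENNReal.ofReal (∫ p, C * bump κ x s p ∂(Pn n)) := by rw [integral_const_mul]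
          _ = ∫⁻ p, ENNReal.ofReal (C * bump κ x s p) ∂(Pn n) :=
              ofReal_integral_eq_lintegral_ofReal ((bump_integrable κ x s (Pn n)).const_mul C)
                (ae_of_all _ fun p => mul_nonneg hC.le (bump_nonneg κ x s p))
          _ ≤ _ := lintegral_mono_ae hpt
      exact absurd hls (not_lt.mpr hbig2)
    rcases lt_abs.mp habs with hcase | hcase
    · refine hbig 1 ?_ hR
      filter_upwards [hae] with p hp
      apply ENNReal.ofReal_le_ofReal
      rcases (bump_nonneg κ x 1 p).lt_or_eq with hbp | hbp
      · obtain ⟨h1, h2⟩ := bump_pos hκ hbp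
        have hx1' : x ≤ p.1 := by nlinarith
        have hfx : f n x ≤ f n p.1 := hmono n ⟨hx0.le, hx1.le⟩ hp hx1'
        have h5 : Real.sqrt C < f n p.1 - p.2 := by
          have := (abs_lt.mp h2).2
          have hT' : T = κ + Real.sqrt C := hTdef
          linarith
        have h6 : C ≤ (p.2 - f n p.1)^2 := by
          nlinarith [Real.sqrt_nonneg C, Real.sq_sqrt hC.le]
        nlinarith [bump_le_one κ x 1 p, hC, hbp.le]
      · rw [← hbp, mul_zero]; positivity
    · refine hbig (-1) ?_ hL
      filter_upwards [hae] with p hp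
      apply ENNReal.ofReal_le_ofReal
      rcases (bump_nonneg κ x (-1) p).lt_or_eq with hbp | hbp
      · obtain ⟨h1, h2⟩ := bump_pos hκ hbp
        have hx1' : p.1 ≤ x := by nlinarith
        have hfx : f n p.1 ≤ f n x := hmono n hp ⟨hx0.le, hx1.le⟩ hx1'
        have h5 : Real.sqrt C < p.2 - f n p.1 := by
          have := (abs_lt.mp h2).1
          have hT' : T = κ + Real.sqrt C := hTdef
          linarith
        have h6 : C ≤ (p.2 - f n p.1)^2 := by
          nlinarith [Real.sqrt_nonneg C, Real.sq_sqrt hC.le]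
        nlinarith [bump_le_one κ x (-1) p, hC, hbp.le]
      · rw [← hbp, mul_zero]; positivity
  have hfin : limsup (fun n => ENNReal.ofReal |f n x|) atTop ≤ ENNReal.ofReal T :=
    limsup_le_of_le (by isBoundedDefault)
      (key.mono fun n hn => ENNReal.ofReal_le_ofReal hn)
  exact lt_of_le_of_lt hfin ((ENNReal.ofReal_lt_ofReal_iff (by linarith)).mpr (by linarith))
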